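/- Let {X_n} be a stationary sequence, b_n a sequence with b_n = o(n), and α_{k,b} the between-block mixing coefficient: α_{k,b} = sup{|P(A∩B) − P(A)P(B)| : A ∈ σ(X_1,…,X_b), B ∈ σ(X_{k+1},…,X_{k+b})}. If ∑_{k=1}^n α_{k,b_n} = o(n) as n → ∞, then for every x ∈ ℝ and every measurable T_b : ℝ^b → ℝ, the subsampling empirical distribution F̂_n(x) = (n−b_n+1)^{−1} ∑_{k=0}^{n−b_n} 1{T_{b_n}(X_{k+1},…,X_{k+b_n}) ≤ x} satisfies Var(F̂_n(x)) → 0 as n → ∞. -/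

import Mathlib

open MeasureTheory Filter Topology

/-- The between-block strong mixing coefficient α_{k,b} of the process X:
sup of |P(A∩B) - P(A)P(B)| over A ∈ σ(X_1,…,X_b), B ∈ σ(X_{k+1},…,X_{k+b})
(indices shifted to start at 0). -/
noncomputable def alphaMix {Ω : Type*} [MeasurableSpace Ω] (μ : Measure Ω)
    (X : ℕ → Ω → ℝ) (k b : ℕ) : ℝ :=
  sSup {x : ℝ | ∃ A B : Set Ω,
    MeasurableSet[MeasurableSpace.comap (fun ω => fun i : Fin b => X (i : ℕ) ω)
      inferInstance] A ∧
    MeasurableSet[MeasurableSpace.comap (fun ω => fun i : Fin b => X (k + (i : ℕ)) ω)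
      inferInstance] B ∧
    x = |(μ (A ∩ B)).toReal - (μ A).toReal * (μ B).toReal|}

section stmt14aux

variable {Ω : Type*} [MeasurableSpace Ω] (μ : Measure Ω) [IsProbabilityMeasure μ]
  (X : ℕ → Ω → ℝ) (x : ℝ) (T : (m : ℕ) → (Fin m → ℝ) → ℝ)

/-- The block event set. -/
def stmt14.blockSet (k bb : ℕ) : Set Ω :=
  {ω | T bb (fun i : Fin bb => X (k + (i : ℕ)) ω) ≤ x}

open stmt14

lemma stmt14.abs_cov_le_one (A B : Set Ω) :
    |(μ (A ∩ B)).toReal - (μ A).toReal * (μ B).toReal| ≤ 1 := by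
  have h1 : (μ (A ∩ B)).toReal ≤ 1 := by
    simpa using ENNReal.toReal_mono (by simp) (prob_le_one (μ := μ) (s := A ∩ B))
  have h2 : (0:ℝ) ≤ (μ (A ∩ B)).toReal := ENNReal.toReal_nonneg
  have h3 : (μ A).toReal ≤ 1 := by
    simpa using ENNReal.toReal_mono (by simp) (prob_le_one (μ := μ) (s := A))
  have h4 : (μ B).toReal ≤ 1 := by
    simpa using ENNReal.toReal_mono (by simp) (prob_le_one (μ := μ) (s := B))
  have h5 : (0:ℝ) ≤ (μ A).toReal := ENNReal.toReal_nonneg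
  have h6 : (0:ℝ) ≤ (μ B).toReal := ENNReal.toReal_nonneg
  rw [abs_le]
  constructor <;> nlinarith

lemma stmt14.bddAbove_alphaSet (k bb : ℕ) : BddAbove {y : ℝ | ∃ A B : Set Ω,
    MeasurableSet[MeasurableSpace.comap (fun ω => fun i : Fin bb => X (i : ℕ) ω)
      inferInstance] A ∧
    MeasurableSet[MeasurableSpace.comap (fun ω => fun i : Fin bb => X (k + (i : ℕ)) ω)
      inferInstance] B ∧
    y = |(μ (A ∩ B)).toReal - (μ A).toReal * (μ B).toReal|} := by
  refine ⟨1, fun y hy => ?_⟩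
  obtain ⟨A, B, -, -, rfl⟩ := hy
  exact abs_cov_le_one μ A B

lemma stmt14.alphaMix_nonneg (k bb : ℕ) : 0 ≤ alphaMix μ X k bb := by
  refine le_csSup (bddAbove_alphaSet μ X k bb) ?_
  exact ⟨∅, ∅, ⟨∅, MeasurableSet.empty, by simp⟩, ⟨∅, MeasurableSet.empty, by simp⟩, by simp⟩

variable (hX : ∀ i, Measurable (X i)) (hT : ∀ m, Measurable (T m))

include hX in
lemma stmt14.meas_window (j L : ℕ) :
    Measurable (fun ω => fun i : Fin L => X (j + (i : ℕ)) ω) :=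
  measurable_pi_lambda _ fun _ => hX _

include hX hT in
lemma stmt14.meas_blockSet (k bb : ℕ) : MeasurableSet (blockSet X x T k bb) :=
  (meas_window X hX k bb) ((hT bb) measurableSet_Iic)

include hT in
lemma stmt14.cov_le_alpha (k bb : ℕ) :
    |(μ (blockSet X x T 0 bb ∩ blockSet X x T k bb)).toReal -
      (μ (blockSet X x T 0 bb)).toReal * (μ (blockSet X x T k bb)).toReal|
      ≤ alphaMix μ X k bb := by
  refine le_csSup (bddAbove_alphaSet μ X k bb) ?_
  refine ⟨blockSet X x T 0 bb, blockSet X x T k bb, ?_, ?_, rfl⟩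
  · refine ⟨T bb ⁻¹' Set.Iic x, (hT bb) measurableSet_Iic, ?_⟩
    have : (fun ω => fun i : Fin bb => X (i : ℕ) ω)
        = fun ω => fun i : Fin bb => X (0 + (i : ℕ)) ω := by
      funext ω i; rw [Nat.zero_add]
    rw [this]; rfl
  · exact ⟨T bb ⁻¹' Set.Iic x, (hT bb) measurableSet_Iic, rfl⟩

variable (hstat : ∀ (k m : ℕ),
      Measure.map (fun ω => fun i : Fin m => X (k + (i : ℕ)) ω) μ =
        Measure.map (fun ω => fun i : Fin m => X (i : ℕ) ω) μ)

include hX hT hstat in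
lemma stmt14.measure_blockSet_shift (j bb : ℕ) :
    μ (blockSet X x T j bb) = μ (blockSet X x T 0 bb) := by
  have hW : ∀ j : ℕ, Measurable (fun ω => fun i : Fin bb => X (j + (i : ℕ)) ω) :=
    fun j => measurable_pi_lambda _ fun _ => hX _
  have hC : MeasurableSet (T bb ⁻¹' Set.Iic x) := (hT bb) measurableSet_Iic
  have e : ∀ j : ℕ, blockSet X x T j bb
      = (fun ω => fun i : Fin bb => X (j + (i : ℕ)) ω) ⁻¹' (T bb ⁻¹' Set.Iic x) :=
    fun j => rfl
  rw [e j, e 0, ← Measure.map_apply (hW j) hC, ← Measure.map_apply (hW 0) hC,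
    hstat j bb, hstat 0 bb]

include hX hT hstat in
lemma stmt14.measure_blockSet_pair_shift (j m bb : ℕ) :
    μ (blockSet X x T j bb ∩ blockSet X x T (j + m) bb)
      = μ (blockSet X x T 0 bb ∩ blockSet X x T m bb) := by
  set L := m + bb with hL
  have hW : ∀ j : ℕ, Measurable (fun ω => fun i : Fin L => X (j + (i : ℕ)) ω) :=
    fun j => measurable_pi_lambda _ fun _ => hX _
  set C₁ : Set (Fin L → ℝ) :=
    (fun v : Fin L → ℝ => T bb (fun i : Fin bb => v ⟨(i:ℕ), by omega⟩)) ⁻¹' Set.Iic x with hC₁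
  set C₂ : Set (Fin L → ℝ) :=
    (fun v : Fin L → ℝ => T bb (fun i : Fin bb => v ⟨m + (i:ℕ), by omega⟩)) ⁻¹' Set.Iic x with hC₂
  have mC₁ : MeasurableSet C₁ :=
    ((hT bb).comp (measurable_pi_lambda _ fun i => measurable_pi_apply _)) measurableSet_Iic
  have mC₂ : MeasurableSet C₂ :=
    ((hT bb).comp (measurable_pi_lambda _ fun i => measurable_pi_apply _)) measurableSet_Iic
  have e1 : ∀ j : ℕ, (fun ω => fun i : Fin L => X (j + (i : ℕ)) ω) ⁻¹' C₁
      = blockSet X x T j bb := fun j => rfl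
  have e2 : ∀ j : ℕ, (fun ω => fun i : Fin L => X (j + (i : ℕ)) ω) ⁻¹' C₂
      = blockSet X x T (j + m) bb := by
    intro j
    ext ω
    show T bb (fun i : Fin bb => X (j + (m + (i:ℕ))) ω) ≤ x ↔ _
    rw [show (fun i : Fin bb => X (j + (m + (i:ℕ))) ω)
        = fun i : Fin bb => X (j + m + (i:ℕ)) ω from funext fun i => by rw [add_assoc]]
    rfl
  have key : ∀ j : ℕ, μ (blockSet X x T j bb ∩ blockSet X x T (j + m) bb)
      = Measure.map (fun ω => fun i : Fin L => X ((i : ℕ)) ω) μ (C₁ ∩ C₂) := by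
    intro j
    rw [← e1 j, ← e2 j, ← Set.preimage_inter, ← Measure.map_apply (hW j) (mC₁.inter mC₂),
      hstat j L]
  have h0 := key 0
  rw [key j, ← h0, Nat.zero_add]

end stmt14aux

section stmt14var

variable {Ω : Type*} [MeasurableSpace Ω] (μ : Measure Ω) [IsProbabilityMeasure μ]

lemma stmt14.int_ind (s : Set Ω) (hs : MeasurableSet s) :
    Integrable (s.indicator fun _ => (1:ℝ)) μ :=
  (integrable_indicator_iff hs).mpr
    (integrableOn_const (measure_ne_top μ s))

open stmt14 in
lemma stmt14.var_expand (S : ℕ → Set Ω) (hS : ∀ k, MeasurableSet (S k)) (N : ℕ) :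
    (∫ ω, (∑ k ∈ Finset.range N, (S k).indicator (fun _ => (1:ℝ)) ω) ^ 2 ∂μ)
      - (∫ ω, (∑ k ∈ Finset.range N, (S k).indicator (fun _ => (1:ℝ)) ω) ∂μ) ^ 2
    = ∑ j ∈ Finset.range N, ∑ k ∈ Finset.range N,
        ((μ (S j ∩ S k)).toReal - (μ (S j)).toReal * (μ (S k)).toReal) := by
  have h1 : (∫ ω, (∑ k ∈ Finset.range N, (S k).indicator (fun _ => (1:ℝ)) ω) ∂μ)
      = ∑ k ∈ Finset.range N, (μ (S k)).toReal := by
    rw [integral_finset_sum _ fun k _ => int_ind μ _ (hS k)]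
    exact Finset.sum_congr rfl fun k _ => by
      rw [integral_indicator_const (1:ℝ) (hS k), smul_eq_mul, mul_one]; rfl
  have hpt : ∀ ω, (∑ k ∈ Finset.range N, (S k).indicator (fun _ => (1:ℝ)) ω) ^ 2
      = ∑ j ∈ Finset.range N, ∑ k ∈ Finset.range N,
          (S j ∩ S k).indicator (fun _ => (1:ℝ)) ω := by
    intro ω
    rw [sq, Finset.sum_mul_sum]
    refine Finset.sum_congr rfl fun j _ => Finset.sum_congr rfl fun k _ => ?_
    rw [← Set.inter_indicator_mul]
    simp [Set.indicator_apply]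
  have h2 : (∫ ω, (∑ k ∈ Finset.range N, (S k).indicator (fun _ => (1:ℝ)) ω) ^ 2 ∂μ)
      = ∑ j ∈ Finset.range N, ∑ k ∈ Finset.range N, (μ (S j ∩ S k)).toReal := by
    rw [show (fun ω => (∑ k ∈ Finset.range N, (S k).indicator (fun _ => (1:ℝ)) ω) ^ 2)
        = fun ω => ∑ j ∈ Finset.range N, ∑ k ∈ Finset.range N,
            (S j ∩ S k).indicator (fun _ => (1:ℝ)) ω from funext hpt]
    rw [integral_finset_sum _ fun j _ =>
      integrable_finset_sum _ fun k _ => int_ind μ _ ((hS j).inter (hS k))]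
    refine Finset.sum_congr rfl fun j _ => ?_
    rw [integral_finset_sum _ fun k _ => int_ind μ _ ((hS j).inter (hS k))]
    exact Finset.sum_congr rfl fun k _ => by
      rw [integral_indicator_const (1:ℝ) ((hS j).inter (hS k)), smul_eq_mul, mul_one]; rfl
  rw [h1, h2, sq, Finset.sum_mul_sum]
  rw [← Finset.sum_sub_distrib]
  exact Finset.sum_congr rfl fun j _ => (Finset.sum_sub_distrib _ _).symm

end stmt14var

open Finset in
lemma stmt14.double_sum_bound (c : ℕ → ℕ → ℝ) (α : ℕ → ℝ) (hα : ∀ m, 0 ≤ α m)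
    (hdiag : ∀ j, |c j j| ≤ 1)
    (hoff : ∀ j k, j < k → |c j k| ≤ α (k - j))
    (hsymm : ∀ j k, c j k = c k j)
    (N n : ℕ) (hNn : N - 1 ≤ n) :
    |∑ j ∈ range N, ∑ k ∈ range N, c j k|
      ≤ N * (1 + 2 * ∑ m ∈ Icc 1 n, α m) := by
  set S := ∑ m ∈ Icc 1 n, α m with hS
  have hS0 : 0 ≤ S := Finset.sum_nonneg fun m _ => hα m
  calc |∑ j ∈ range N, ∑ k ∈ range N, c j k|
      ≤ ∑ j ∈ range N, |∑ k ∈ range N, c j k| := Finset.abs_sum_le_sum_abs _ _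
    _ ≤ ∑ j ∈ range N, ∑ k ∈ range N, |c j k| :=
        Finset.sum_le_sum fun j _ => Finset.abs_sum_le_sum_abs _ _
    _ ≤ ∑ j ∈ range N, (1 + 2 * S) := by
        refine Finset.sum_le_sum fun j hj => ?_
        have hjN : j < N := Finset.mem_range.mp hj
        rw [← Finset.add_sum_erase _ _ hj]
        have herase : ∑ k ∈ (range N).erase j, |c j k| ≤ 2 * S := by
          have hsub : (range N).erase j ⊆
              ((range N).filter (· < j)) ∪ ((range N).filter (j < ·)) := by
            intro k hk
            simp only [Finset.mem_erase, Finset.mem_range] at hk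
            simp only [Finset.mem_union, Finset.mem_filter, Finset.mem_range]
            omega
          have hdisj : Disjoint ((range N).filter (· < j)) ((range N).filter (j < ·)) := by
            rw [Finset.disjoint_filter]
            intro k _ h1; omega
          calc ∑ k ∈ (range N).erase j, |c j k|
              ≤ ∑ k ∈ ((range N).filter (· < j)) ∪ ((range N).filter (j < ·)), |c j k| :=
                Finset.sum_le_sum_of_subset_of_nonneg hsub fun k _ _ => abs_nonneg _
            _ = ∑ k ∈ (range N).filter (· < j), |c j k|
                + ∑ k ∈ (range N).filter (j < ·), |c j k| := Finset.sum_union hdisj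
            _ ≤ ∑ k ∈ (range N).filter (· < j), α (j - k)
                + ∑ k ∈ (range N).filter (j < ·), α (k - j) := by
                refine add_le_add (Finset.sum_le_sum fun k hk => ?_)
                  (Finset.sum_le_sum fun k hk => ?_)
                · have : k < j := (Finset.mem_filter.mp hk).2
                  rw [hsymm]; exact hoff k j this
                · exact hoff j k (Finset.mem_filter.mp hk).2
            _ ≤ S + S := by
                refine add_le_add ?_ ?_
                · have hinj : ∀ a ∈ (range N).filter (· < j), ∀ b ∈ (range N).filter (· < j),
                      j - a = j - b → a = b := by
                    intro a ha b hb hab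
                    have h1 := (Finset.mem_filter.mp ha).2
                    have h2 := (Finset.mem_filter.mp hb).2
                    omega
                  rw [show (∑ k ∈ (range N).filter (· < j), α (j - k))
                      = ∑ m ∈ ((range N).filter (· < j)).image (fun k => j - k), α m from
                    (Finset.sum_image hinj).symm]
                  refine Finset.sum_le_sum_of_subset_of_nonneg ?_ fun m _ _ => hα m
                  intro m hm
                  simp only [Finset.mem_image, Finset.mem_filter, Finset.mem_range] at hm
                  obtain ⟨k, ⟨hkN, hkj⟩, rfl⟩ := hm
                  simp only [Finset.mem_Icc]; omega
                · have hinj : ∀ a ∈ (range N).filter (j < ·), ∀ b ∈ (range N).filter (j < ·),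
                      a - j = b - j → a = b := by
                    intro a ha b hb hab
                    have h1 := (Finset.mem_filter.mp ha).2
                    have h2 := (Finset.mem_filter.mp hb).2
                    omega
                  rw [show (∑ k ∈ (range N).filter (j < ·), α (k - j))
                      = ∑ m ∈ ((range N).filter (j < ·)).image (fun k => k - j), α m from
                    (Finset.sum_image hinj).symm]
                  refine Finset.sum_le_sum_of_subset_of_nonneg ?_ fun m _ _ => hα m
                  intro m hm
                  simp only [Finset.mem_image, Finset.mem_filter, Finset.mem_range] at hm
                  obtain ⟨k, ⟨hkN, hkj⟩, rfl⟩ := hm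
                  simp only [Finset.mem_Icc]; omega
            _ = 2 * S := by ring
        linarith [hdiag j, herase]
    _ = N * (1 + 2 * S) := by rw [Finset.sum_const, Finset.card_range, nsmul_eq_mul]

/-- for a stationary sequence with block sizes b_n = o(n) and
∑_{k=1}^n α_{k,b_n} = o(n), the variance of the subsampling empirical
distribution tends to 0. -/
theorem stmt14 {Ω : Type*} [MeasurableSpace Ω] (μ : Measure Ω)
    [IsProbabilityMeasure μ]
    (X : ℕ → Ω → ℝ) (hX : ∀ i, Measurable (X i))
    (hstat : ∀ (k m : ℕ),
      Measure.map (fun ω => fun i : Fin m => X (k + (i : ℕ)) ω) μ =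
        Measure.map (fun ω => fun i : Fin m => X (i : ℕ) ω) μ)
    (b : ℕ → ℕ) (hb : Tendsto (fun n : ℕ => (b n : ℝ) / n) atTop (𝓝 0))
    (hα : Tendsto (fun n : ℕ =>
        (∑ k ∈ Finset.Icc 1 n, alphaMix μ X k (b n)) / n) atTop (𝓝 0))
    (x : ℝ) (T : (m : ℕ) → (Fin m → ℝ) → ℝ) (hT : ∀ m, Measurable (T m)) :
    Tendsto (fun n : ℕ =>
      (let I : ℕ → Ω → ℝ := fun k ω =>
        if T (b n) (fun i : Fin (b n) => X (k + (i : ℕ)) ω) ≤ x then 1 else 0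
       let Fhat : Ω → ℝ := fun ω =>
        (∑ k ∈ Finset.range (n - b n + 1), I k ω) / (n - b n + 1 : ℝ)
       (∫ ω, Fhat ω ^ 2 ∂μ) - (∫ ω, Fhat ω ∂μ) ^ 2)) atTop (𝓝 0) := by
  classical
  set α : ℕ → ℕ → ℝ := fun n k => alphaMix μ X k (b n) with hαdef
  set Ssum : ℕ → ℝ := fun n => ∑ m ∈ Finset.Icc 1 n, α n m with hSsum
  -- the dominating sequence
  set g : ℕ → ℝ := fun n => 2 / (n:ℝ) + 4 * (Ssum n / n) with hgdef
  have hg0 : Tendsto g atTop (𝓝 0) := by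
    have h1 : Tendsto (fun n : ℕ => 2 / (n:ℝ)) atTop (𝓝 0) :=
      tendsto_const_div_atTop_nhds_zero_nat 2
    have h2 : Tendsto (fun n : ℕ => 4 * (Ssum n / n)) atTop (𝓝 (4 * 0)) :=
      hα.const_mul 4
    rw [mul_zero] at h2
    simpa using h1.add h2
  refine squeeze_zero_norm' ?_ hg0
  -- eventual bound
  have hev : ∀ᶠ n : ℕ in atTop, 1 ≤ n ∧ (b n : ℝ) ≤ (n:ℝ) / 2 := by
    have h2 : ∀ᶠ n : ℕ in atTop, (b n : ℝ) / n ≤ 1 / 2 := by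
      have := hb.eventually (eventually_le_nhds (by norm_num : (0:ℝ) < 1/2))
      exact this
    filter_upwards [h2, eventually_ge_atTop 1] with n hn hn1
    refine ⟨hn1, ?_⟩
    have hnpos : (0:ℝ) < n := by exact_mod_cast hn1
    rw [div_le_div_iff₀ hnpos (by norm_num)] at hn
    linarith
  filter_upwards [hev] with n hn
  obtain ⟨hn1, hbhalf⟩ := hn
  have hnpos : (0:ℝ) < n := by exact_mod_cast hn1
  have hbn : b n ≤ n := by
    by_contra h
    push_neg at h
    have : (n:ℝ) + 1 ≤ (b n : ℝ) := by exact_mod_cast h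
    linarith
  set bb := b n with hbb
  set N := n - bb + 1 with hN
  set S : ℕ → Set Ω := fun k => stmt14.blockSet X x T k bb with hSdef
  have hSmeas : ∀ k, MeasurableSet (S k) := fun k => stmt14.meas_blockSet X x T hX hT k bb
  -- the covariance function
  set c : ℕ → ℕ → ℝ := fun j k =>
    (μ (S j ∩ S k)).toReal - (μ (S j)).toReal * (μ (S k)).toReal with hc
  -- identify the real denominator with N
  have hrN : ((n:ℝ) - (bb:ℝ) + 1) = (N:ℝ) := by
    rw [hN]
    push_cast [Nat.cast_sub hbn]
    ring
  have hNposℕ : 1 ≤ N := by omega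
  have hNpos : (0:ℝ) < N := by exact_mod_cast hNposℕ
  have hNhalf : (n:ℝ)/2 ≤ (N:ℝ) := by
    rw [← hrN]; linarith
  -- rewrite the `if` as an indicator
  have hI : ∀ (k : ℕ) (ω : Ω),
      (if T bb (fun i : Fin bb => X (k + (i:ℕ)) ω) ≤ x then (1:ℝ) else 0)
        = (S k).indicator (fun _ => (1:ℝ)) ω := by
    intro k ω
    by_cases h : T bb (fun i : Fin bb => X (k + (i:ℕ)) ω) ≤ x <;>
      simp [hSdef, stmt14.blockSet, Set.indicator_apply, h]
  show ‖(∫ ω, ((∑ k ∈ Finset.range N,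
        if T bb (fun i : Fin bb => X (k + (i:ℕ)) ω) ≤ x then (1:ℝ) else 0)
          / ((n:ℝ) - (bb:ℝ) + 1)) ^ 2 ∂μ)
      - (∫ ω, (∑ k ∈ Finset.range N,
          if T bb (fun i : Fin bb => X (k + (i:ℕ)) ω) ≤ x then (1:ℝ) else 0)
            / ((n:ℝ) - (bb:ℝ) + 1) ∂μ) ^ 2‖ ≤ g n
  have hfeq : (fun ω => (∑ k ∈ Finset.range N,
      if T bb (fun i : Fin bb => X (k + (i:ℕ)) ω) ≤ x then (1:ℝ) else 0))
      = fun ω => ∑ k ∈ Finset.range N, (S k).indicator (fun _ => (1:ℝ)) ω := by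
    funext ω
    exact Finset.sum_congr rfl fun k _ => hI k ω
  rw [hrN]
  simp only [hI]
  have hNne : (N:ℝ) ≠ 0 := ne_of_gt hNpos
  have key : (∫ ω, ((∑ k ∈ Finset.range N, (S k).indicator (fun _ => (1:ℝ)) ω)
        / (N:ℝ)) ^ 2 ∂μ)
      - (∫ ω, (∑ k ∈ Finset.range N, (S k).indicator (fun _ => (1:ℝ)) ω) / (N:ℝ) ∂μ) ^ 2
      = (∑ j ∈ Finset.range N, ∑ k ∈ Finset.range N, c j k) / (N:ℝ)^2 := by
    have e1 : (fun ω => ((∑ k ∈ Finset.range N, (S k).indicator (fun _ => (1:ℝ)) ω)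
        / (N:ℝ)) ^ 2)
        = fun ω => (∑ k ∈ Finset.range N, (S k).indicator (fun _ => (1:ℝ)) ω) ^ 2
            / (N:ℝ)^2 := by
      funext ω; rw [div_pow]
    rw [e1, integral_div, integral_div, div_pow, div_sub_div_same,
      stmt14.var_expand μ S hSmeas N]
  rw [key]
  -- bound the double sum
  have hsum : |∑ j ∈ Finset.range N, ∑ k ∈ Finset.range N, c j k|
      ≤ (N:ℝ) * (1 + 2 * Ssum n) := by
    refine stmt14.double_sum_bound c (α n) (fun m => stmt14.alphaMix_nonneg μ X m bb)
      (fun j => stmt14.abs_cov_le_one μ _ _) ?_ ?_ N n (by omega)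
    · intro j k hjk
      obtain ⟨m, rfl⟩ : ∃ m, k = j + m := ⟨k - j, by omega⟩
      rw [Nat.add_sub_cancel_left]
      have hpair := stmt14.measure_blockSet_pair_shift μ X x T hX hT hstat j m bb
      have hs1 := stmt14.measure_blockSet_shift μ X x T hX hT hstat j bb
      have hs2 := stmt14.measure_blockSet_shift μ X x T hX hT hstat (j + m) bb
      have hs3 := stmt14.measure_blockSet_shift μ X x T hX hT hstat m bb
      have hcm : c j (j + m) = (μ (S 0 ∩ S m)).toReal
          - (μ (S 0)).toReal * (μ (S m)).toReal := by
        simp only [hc]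
        rw [show μ (S j ∩ S (j + m)) = μ (S 0 ∩ S m) from hpair, hs1, hs2, hs3]
      rw [hcm]
      exact stmt14.cov_le_alpha μ X x T hT m bb
    · intro j k
      simp only [hc, Set.inter_comm, mul_comm]
  -- final chain of inequalities
  have hSs0 : 0 ≤ Ssum n := Finset.sum_nonneg fun m _ => stmt14.alphaMix_nonneg μ X m bb
  have hc1 : (0:ℝ) ≤ 1 + 2 * Ssum n := by linarith
  calc ‖(∑ j ∈ Finset.range N, ∑ k ∈ Finset.range N, c j k) / (N:ℝ)^2‖
      = |∑ j ∈ Finset.range N, ∑ k ∈ Finset.range N, c j k| / (N:ℝ)^2 := by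
        rw [Real.norm_eq_abs, abs_div, abs_of_nonneg (sq_nonneg ((N:ℝ)))]
    _ ≤ ((N:ℝ) * (1 + 2 * Ssum n)) / (N:ℝ)^2 :=
        div_le_div_of_nonneg_right hsum (by positivity)
    _ = (1 + 2 * Ssum n) / (N:ℝ) := by
        rw [sq]
        rw [mul_div_mul_left _ _ hNne]
    _ ≤ (1 + 2 * Ssum n) / ((n:ℝ)/2) := by
        exact div_le_div_of_nonneg_left hc1 (by positivity) hNhalf
    _ = g n := by
        rw [hgdef]
        field_simp
        ring
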